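/- For any finite set S of words over a finite alphabet Σ and any two minimal envelopes W and W' of S (envelopes with the minimal possible number of parameters), the embedding types coincide: τ_W(S) = τ_{W'}(S). -/

import Mathlib

/-- `W` is a `k`-parameter word over the alphabet `σ` (letters are `Sum.inl`, parameters
`λ_i` are `Sum.inr i`): all parameters are among `λ_0, …, λ_{k-1}`, every such parameter
occurs, and before every occurrence of `λ_j` there is an occurrence of `λ_i` for all
`i < j` (equivalently, first occurrences of parameters come in increasing order).
A `0`-parameter word is just a word over `σ`. -/
def IsPWord {σ : Type} (k : ℕ) (W : List (σ ⊕ ℕ)) : Prop :=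
  (∀ i : ℕ, Sum.inr i ∈ W → i < k) ∧
  (∀ i : ℕ, i < k → Sum.inr i ∈ W) ∧
  (∀ i j : ℕ, i < j → ∀ p : Fin W.length, W.get p = Sum.inr j →
    ∃ q : Fin W.length, q < p ∧ W.get q = Sum.inr i)

/-- Substitution `W(U)`: replace each occurrence of the parameter `λ_i` in `W` by `U_i`
and truncate just before the first occurrence of a parameter `λ_i` with `i ≥ |U|`. -/
def subst {σ : Type} (W U : List (σ ⊕ ℕ)) : List (σ ⊕ ℕ) :=
  (W.takeWhile fun a =>
    match a with
    | Sum.inl _ => true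
    | Sum.inr i => decide (i < U.length)).map fun a =>
      match a with
      | Sum.inl s => Sum.inl s
      | Sum.inr i => U.getD i (Sum.inr 0)

/-- `W` is a `d`-parameter envelope of `S` with embedding type `S'`: `W(S') = S`,
where `S'` is a set of words over `σ` of length at most `d`. -/
def IsEnvelopeOf {σ : Type} [DecidableEq σ] (d : ℕ) (W : List (σ ⊕ ℕ))
    (S S' : Finset (List (σ ⊕ ℕ))) : Prop :=
  IsPWord d W ∧ (∀ w ∈ S', IsPWord 0 w ∧ w.length ≤ d) ∧ S'.image (subst W) = S

namespace ETU
set_option linter.unusedSectionVars false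
set_option linter.unusedVariables false

variable {σ : Type} [DecidableEq σ]

def pd (m : ℕ) : σ ⊕ ℕ → Bool := fun a =>
  match a with
  | Sum.inl _ => true
  | Sum.inr i => decide (i < m)

def gg (U : List (σ ⊕ ℕ)) : σ ⊕ ℕ → σ ⊕ ℕ := fun a =>
  match a with
  | Sum.inl s => Sum.inl s
  | Sum.inr i => U.getD i (Sum.inr 0)

lemma subst_def (W U : List (σ ⊕ ℕ)) :
    subst W U = (W.takeWhile (pd U.length)).map (gg U) := rfl

def fo (W : List (σ ⊕ ℕ)) (i : ℕ) : ℕ := W.findIdx (fun x => decide (x = Sum.inr i))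

def Ff (d : ℕ) (W : List (σ ⊕ ℕ)) (m : ℕ) : ℕ := if m < d then fo W m else W.length

lemma fo_lt {d : ℕ} {W : List (σ ⊕ ℕ)} (hW : IsPWord d W) {i : ℕ} (hi : i < d) :
    fo W i < W.length :=
  List.findIdx_lt_length_of_exists ⟨_, hW.2.1 i hi, by simp⟩

lemma getElem_fo {W : List (σ ⊕ ℕ)} {i : ℕ} (h : fo W i < W.length) :
    W[fo W i] = Sum.inr i := by
  have := @List.findIdx_getElem _ (fun x => decide (x = Sum.inr i)) W h
  exact of_decide_eq_true this

lemma fo_le {W : List (σ ⊕ ℕ)} {i q : ℕ} (h : q < W.length) (hq : W[q] = Sum.inr i) :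
    fo W i ≤ q := by
  by_contra h'
  push_neg at h'
  have := List.not_of_lt_findIdx (p := fun x => decide (x = Sum.inr i)) h'
  simp [hq] at this

lemma fo_mono {d : ℕ} {W : List (σ ⊕ ℕ)} (hW : IsPWord d W) {i j : ℕ}
    (hij : i < j) (hj : j < d) : fo W i < fo W j := by
  have hjl := fo_lt hW hj
  obtain ⟨q, hq, hqe⟩ := hW.2.2 i j hij ⟨fo W j, hjl⟩
    (by simpa [List.get_eq_getElem] using getElem_fo hjl)
  have : fo W i ≤ q.val := fo_le q.isLt (by simpa [List.get_eq_getElem] using hqe)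
  exact lt_of_le_of_lt this hq

lemma Ff_le {d : ℕ} {W : List (σ ⊕ ℕ)} (hW : IsPWord d W) (m : ℕ) :
    Ff d W m ≤ W.length := by
  unfold Ff; split
  · exact (fo_lt hW ‹_›).le
  · exact le_refl _

lemma Ff_lt_of_lt {d : ℕ} {W : List (σ ⊕ ℕ)} (hW : IsPWord d W) {m m' : ℕ}
    (h : m < m') (h' : m' ≤ d) : Ff d W m < Ff d W m' := by
  unfold Ff
  by_cases hm' : m' < d
  · simp only [hm', if_true, if_pos (h.trans hm')]
    exact fo_mono hW h hm'
  · have hmd : m < d := by omega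
    simp only [hm', if_false, if_pos hmd]
    exact fo_lt hW hmd

lemma Ff_mono {d : ℕ} {W : List (σ ⊕ ℕ)} (hW : IsPWord d W) {m m' : ℕ}
    (h : m ≤ m') (h' : m' ≤ d) : Ff d W m ≤ Ff d W m' := by
  rcases eq_or_lt_of_le h with rfl | hlt
  · exact le_refl _
  · exact (Ff_lt_of_lt hW hlt h').le


lemma getElem_idx_congr {α : Type*} {l : List α} {i j : ℕ} (h : i = j) (hj : j < l.length) :
    l[i]'(h ▸ hj) = l[j] := by subst h; rfl

lemma takeWhile_eq_take {α : Type*} (p : α → Bool) (l : List α) (n : ℕ) (hn : n ≤ l.length)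
    (h1 : ∀ q (h : q < n), p (l[q]'(lt_of_lt_of_le h hn)) = true)
    (h2 : ∀ (h : n < l.length), p (l[n]) = false) :
    l.takeWhile p = l.take n := by
  induction l generalizing n with
  | nil => simp
  | cons a l ih =>
    cases n with
    | zero =>
      have := h2 (by simp)
      simp only [List.getElem_cons_zero] at this
      simp [List.takeWhile_cons, this]
    | succ n =>
      have ha := h1 0 (Nat.succ_pos n)
      simp only [List.getElem_cons_zero] at ha
      simp only [List.takeWhile_cons, ha, if_true, List.take_succ_cons]
      rw [ih n (by simpa using hn) (fun q h => by simpa using h1 (q+1) (by omega))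
        (fun h => by have := h2 (by simpa using h); exact this)]

lemma pd_true_of_lt {d : ℕ} {W : List (σ ⊕ ℕ)} (hW : IsPWord d W) {m q : ℕ} (hm : m ≤ d)
    (hq : q < Ff d W m) (h' : q < W.length) : pd m (W[q]) = true := by
  cases hWq : W[q] with
  | inl a => simp [pd, hWq]
  | inr k =>
    have hk : k < m := by
      by_contra hk'
      push_neg at hk'
      have hkd : k < d := hW.1 k (hWq ▸ List.getElem_mem h')
      have hmd : m < d := lt_of_le_of_lt hk' hkd
      have hqfo : q < fo W m := by simpa [Ff, hmd] using hq
      rcases eq_or_lt_of_le hk' with rfl | hmk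
      · exact absurd (fo_le h' hWq) (by omega)
      · obtain ⟨q', hq', hq'e⟩ := hW.2.2 m k hmk ⟨q, h'⟩
          (by simpa [List.get_eq_getElem] using hWq)
        have : fo W m ≤ q'.val := fo_le q'.isLt (by simpa [List.get_eq_getElem] using hq'e)
        have hq'q : q'.val < q := hq'
        omega
    simp [pd, hWq, hk]

lemma pd_false_at {d : ℕ} {W : List (σ ⊕ ℕ)} (hW : IsPWord d W) {m : ℕ}
    (h : Ff d W m < W.length) : pd m (W[Ff d W m]) = false := by
  have hmd : m < d := by
    by_contra h'
    simp [Ff, h'] at h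
  have hfo : Ff d W m = fo W m := by simp [Ff, hmd]
  have hgm : W[Ff d W m]'h = Sum.inr m := by
    have h2 : fo W m < W.length := hfo ▸ h
    have := getElem_fo h2
    revert h
    rw [hfo]
    intro h
    exact this
  simp [pd, hgm]

lemma takeWhile_pd {d : ℕ} {W : List (σ ⊕ ℕ)} (hW : IsPWord d W) {m : ℕ} (hm : m ≤ d) :
    W.takeWhile (pd m) = W.take (Ff d W m) := by
  apply takeWhile_eq_take _ _ _ (Ff_le hW m)
  · intro q hq
    exact pd_true_of_lt hW hm hq _
  · intro h
    exact pd_false_at hW h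

lemma subst_eq {d : ℕ} {W : List (σ ⊕ ℕ)} (hW : IsPWord d W) {U : List (σ ⊕ ℕ)}
    (hu : U.length ≤ d) :
    subst W U = (W.take (Ff d W U.length)).map (gg U) := by
  rw [subst_def, takeWhile_pd hW hu]

lemma length_subst {d : ℕ} {W : List (σ ⊕ ℕ)} (hW : IsPWord d W) {U : List (σ ⊕ ℕ)}
    (hu : U.length ≤ d) :
    (subst W U).length = Ff d W U.length := by
  rw [subst_eq hW hu]
  simp [Ff_le hW]

lemma getElem_subst {d : ℕ} {W : List (σ ⊕ ℕ)} (hW : IsPWord d W) {U : List (σ ⊕ ℕ)}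
    (hu : U.length ≤ d) {q : ℕ} (hq : q < Ff d W U.length) :
    (subst W U)[q]'(by rw [length_subst hW hu]; exact hq)
      = gg U (W[q]'(lt_of_lt_of_le hq (Ff_le hW _))) := by
  have h := subst_eq hW hu
  rw [List.getElem_of_eq h]
  rw [List.getElem_map]
  congr 1
  exact List.getElem_take

lemma param_lt {d : ℕ} {W : List (σ ⊕ ℕ)} (hW : IsPWord d W) {m q k : ℕ} (hm : m ≤ d)
    (hq : q < Ff d W m) (h' : q < W.length) (hk : W[q] = Sum.inr k) : k < m := by
  have := pd_true_of_lt hW hm hq h'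
  rw [hk] at this
  simpa [pd] using this

lemma subst_getElem_fo {d : ℕ} {W : List (σ ⊕ ℕ)} (hW : IsPWord d W) {U : List (σ ⊕ ℕ)}
    (hu : U.length ≤ d) {k : ℕ} (hk : k < U.length) :
    ∃ (hlt : fo W k < Ff d W U.length),
      (subst W U)[fo W k]'(by rw [length_subst hW hu]; exact hlt)
        = U.getD k (Sum.inr 0) := by
  have hkd : k < d := lt_of_lt_of_le hk hu
  have h1 : fo W k < Ff d W U.length := by
    have := Ff_lt_of_lt hW hk hu
    simpa [Ff, hkd] using this
  refine ⟨h1, ?_⟩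
  rw [getElem_subst hW hu h1]
  have := getElem_fo (lt_of_lt_of_le h1 (Ff_le hW _))
  rw [this]
  rfl

lemma isPWord_zero {w : List (σ ⊕ ℕ)} (h : ∀ i : ℕ, Sum.inr i ∉ w) : IsPWord 0 w := by
  refine ⟨fun i hi => absurd hi (h i), fun i hi => absurd hi (by omega), ?_⟩
  intro i j _ p hp
  have : w.get p ∈ w := by
    rw [List.get_eq_getElem]
    exact List.getElem_mem p.isLt
  exact absurd (hp ▸ this) (h j)

lemma no_param {w : List (σ ⊕ ℕ)} (h : IsPWord 0 w) : ∀ i : ℕ, Sum.inr i ∉ w :=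
  fun i hi => absurd (h.1 i hi) (by omega)


variable {σ : Type} [DecidableEq σ]

lemma prefix_envelope {d : ℕ} {W : List (σ ⊕ ℕ)} {S S' : Finset (List (σ ⊕ ℕ))}
    (hE : IsEnvelopeOf d W S S') {m : ℕ} (hm : m ≤ d) (hall : ∀ u ∈ S', u.length ≤ m) :
    IsEnvelopeOf m (W.take (Ff d W m)) S S' := by
  obtain ⟨hW, hS', himg⟩ := hE
  set n := Ff d W m with hn_def
  have hn : n ≤ W.length := Ff_le hW m
  have hlen : (W.take n).length = n := by simp [List.length_take]; omega
  refine ⟨⟨?_, ?_, ?_⟩, fun u hu => ⟨(hS' u hu).1, hall u hu⟩, ?_⟩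
  · -- params of the prefix are < m
    intro k hk
    rw [← takeWhile_pd hW hm] at hk
    have := List.mem_takeWhile_imp hk
    simpa [pd] using this
  · -- every k < m occurs
    intro k hk
    have hkd : k < d := lt_of_lt_of_le hk hm
    have hfon : fo W k < n := by
      have := Ff_lt_of_lt hW hk hm
      simpa [Ff, hkd, hn_def] using this
    have h1 : fo W k < (W.take n).length := by omega
    have : (W.take n)[fo W k] = Sum.inr k := by
      rw [List.getElem_take]
      exact getElem_fo (lt_of_lt_of_le hfon hn)
    have hmem := List.getElem_mem h1
    rw [this] at hmem
    exact hmem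
  · -- ordering
    intro a b hab p hp
    have hpW : p.val < W.length := by
      have h0 := p.isLt
      have h1 : (List.take n W).length = n := hlen
      omega
    have hp' : W[p.val] = Sum.inr b := by
      have := hp
      rw [List.get_eq_getElem, List.getElem_take] at this
      exact this
    obtain ⟨q, hq, hqe⟩ := hW.2.2 a b hab ⟨p.val, hpW⟩
      (by simpa [List.get_eq_getElem] using hp')
    have hqn : q.val < (W.take n).length := by
      have : q.val < p.val := hq
      have := p.isLt
      omega
    refine ⟨⟨q.val, hqn⟩, by simpa [Fin.lt_def] using (hq : q.val < p.val), ?_⟩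
    rw [List.get_eq_getElem, List.getElem_take]
    simpa [List.get_eq_getElem] using hqe
  · -- image
    rw [← himg]
    apply Finset.image_congr
    intro u hu
    simp only [Finset.mem_coe] at hu
    have hum : u.length ≤ m := hall u hu
    have hud : u.length ≤ d := le_trans hum hm
    -- subst (take n W) u = subst W u
    have hWt : (W.take n).takeWhile (pd u.length) = (W.take n).take (Ff d W u.length) := by
      apply takeWhile_eq_take _ _ _ (by rw [hlen]; exact Ff_mono hW hum hm)
      · intro q hq
        have hq2 : q < n := lt_of_lt_of_le hq (Ff_mono hW hum hm)
        have hqW : q < W.length := lt_of_lt_of_le hq2 hn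
        have : (W.take n)[q]'(by omega) = W[q] := List.getElem_take
        rw [this]
        exact pd_true_of_lt hW hud hq _
      · intro h
        have hFn : Ff d W u.length < n := hlen ▸ h
        have hFW : Ff d W u.length < W.length := lt_of_lt_of_le hFn hn
        have : (W.take n)[Ff d W u.length]'h = W[Ff d W u.length] := List.getElem_take
        rw [this]
        exact pd_false_at hW hFW
    rw [subst_def, hWt, List.take_take, min_eq_left (Ff_mono hW hum hm), ← takeWhile_pd hW hud,
      ← subst_def]

def repl (i : ℕ) (c : σ ⊕ ℕ) : σ ⊕ ℕ → σ ⊕ ℕ := fun x =>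
  match x with
  | Sum.inl a => Sum.inl a
  | Sum.inr k => if k < i then Sum.inr k else if k = i then c else Sum.inr (k - 1)

lemma repl_eq_inr {i : ℕ} {c : σ ⊕ ℕ} (hc : ∀ j, c = Sum.inr j → j < i) {x : σ ⊕ ℕ} {b : ℕ}
    (h : repl i c x = Sum.inr b) :
    (x = Sum.inr b ∧ b < i) ∨ (x = Sum.inr i ∧ c = Sum.inr b ∧ b < i) ∨
      (x = Sum.inr (b + 1) ∧ i ≤ b) := by
  cases x with
  | inl a => simp [repl] at h
  | inr k =>
    simp only [repl] at h
    split at h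
    · rename_i hki
      have hkb : k = b := by simpa using h
      subst hkb
      exact Or.inl ⟨rfl, hki⟩
    · split at h
      · rename_i _ hki
        subst hki
        exact Or.inr (Or.inl ⟨rfl, h, hc b h⟩)
      · rename_i hki hki2
        have hb : k - 1 = b := by simpa using h
        refine Or.inr (Or.inr ⟨?_, by omega⟩)
        congr 1
        omega

lemma getD_eraseIdx_lt {α : Type*} (l : List α) {i k : ℕ} (hk : k < i) (v : α) :
    (l.eraseIdx i).getD k v = l.getD k v := by
  rw [List.getD_eq_getElem?_getD, List.getD_eq_getElem?_getD, List.getElem?_eraseIdx,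
    if_pos hk]

lemma getD_eraseIdx_ge {α : Type*} (l : List α) {i k : ℕ} (hk : i ≤ k) (v : α) :
    (l.eraseIdx i).getD k v = l.getD (k + 1) v := by
  rw [List.getD_eq_getElem?_getD, List.getD_eq_getElem?_getD, List.getElem?_eraseIdx,
    if_neg (by omega)]

lemma merge_envelope {d : ℕ} {W : List (σ ⊕ ℕ)} {S S' : Finset (List (σ ⊕ ℕ))}
    (hE : IsEnvelopeOf d W S S') {i : ℕ} (hi : i < d) (c : σ ⊕ ℕ)
    (hc : ∀ j, c = Sum.inr j → j < i)
    (hne : ∀ u ∈ S', u.length ≠ i)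
    (hval : ∀ u ∈ S', i < u.length → u.getD i (Sum.inr 0) = gg u c) :
    IsEnvelopeOf (d - 1) (W.map (repl i c)) S (S'.image (fun u => u.eraseIdx i)) := by
  obtain ⟨hW, hS', himg⟩ := hE
  have hlenW : (W.map (repl i c)).length = W.length := by simp
  refine ⟨⟨?_, ?_, ?_⟩, ?_, ?_⟩
  · -- cond1
    intro b hb
    obtain ⟨x, hx, hxe⟩ := List.mem_map.1 hb
    rcases repl_eq_inr hc hxe with ⟨hxb, hbi⟩ | ⟨_, _, hbi⟩ | ⟨hxb, hbi⟩
    · omega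
    · omega
    · have := hW.1 (b + 1) (hxb ▸ hx)
      omega
  · -- cond2
    intro b hb
    by_cases hbi : b < i
    · have hmem : Sum.inr b ∈ W := hW.2.1 b (by omega)
      refine List.mem_map.2 ⟨Sum.inr b, hmem, ?_⟩
      simp [repl, hbi]
    · have hmem : Sum.inr (b + 1) ∈ W := hW.2.1 (b + 1) (by omega)
      refine List.mem_map.2 ⟨Sum.inr (b + 1), hmem, ?_⟩
      simp only [repl]
      rw [if_neg (by omega), if_neg (by omega)]
      congr 1
  · -- cond3
    intro a b hab p hp
    have hpW : p.val < W.length := by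
      have := p.isLt
      omega
    have hp' : repl i c (W[p.val]) = Sum.inr b := by
      have := hp
      rw [List.get_eq_getElem, List.getElem_map] at this
      exact this
    -- original index a'
    have key : ∃ k'' : ℕ, (if a < i then a else a + 1) < k'' ∧ W[p.val] = Sum.inr k'' := by
      rcases repl_eq_inr hc hp' with ⟨hxb, hbi⟩ | ⟨hxi, _, hbi⟩ | ⟨hxb, hbi⟩
      · exact ⟨b, by split <;> omega, hxb⟩
      · exact ⟨i, by split <;> omega, hxi⟩
      · exact ⟨b + 1, by split <;> omega, hxb⟩
    obtain ⟨k'', hak, hk''⟩ := key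
    obtain ⟨q, hq, hqe⟩ := hW.2.2 (if a < i then a else a + 1) k'' hak ⟨p.val, hpW⟩
      (by simpa [List.get_eq_getElem] using hk'')
    have hqW : q.val < (W.map (repl i c)).length := by
      rw [hlenW]; exact q.isLt
    refine ⟨⟨q.val, hqW⟩, by simpa [Fin.lt_def] using (hq : q.val < p.val), ?_⟩
    rw [List.get_eq_getElem, List.getElem_map]
    have hq' : W[q.val] = Sum.inr (if a < i then a else a + 1) := by
      simpa [List.get_eq_getElem] using hqe
    rcases Nat.lt_or_ge a i with hai | hai
    · rw [if_pos hai] at hq'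
      rw [hq']
      simp [repl, hai]
    · rw [if_neg (by omega)] at hq'
      rw [hq']
      simp only [repl]
      rw [if_neg (by omega), if_neg (by omega)]
      congr 1
  · -- words
    intro w hw
    obtain ⟨u, hu, rfl⟩ := Finset.mem_image.1 hw
    refine ⟨isPWord_zero fun j hj => no_param (hS' u hu).1 j (List.eraseIdx_subset hj), ?_⟩
    rw [List.length_eraseIdx]
    have h1 := (hS' u hu).2
    have h2 := hne u hu
    split <;> omega
  · -- image
    rw [Finset.image_image, ← himg]
    apply Finset.image_congr
    intro u hu
    simp only [Finset.mem_coe] at hu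
    have hud := (hS' u hu).2
    have hnei := hne u hu
    have hm'v : (u.eraseIdx i).length = if i < u.length then u.length - 1 else u.length := by
      rw [List.length_eraseIdx]
    -- takeWhile characterization on the mapped word
    have hTW : (W.map (repl i c)).takeWhile (pd (u.eraseIdx i).length)
        = (W.map (repl i c)).take (Ff d W u.length) := by
      apply takeWhile_eq_take _ _ _ (by rw [hlenW]; exact Ff_le hW u.length)
      · intro q hq
        have hqW : q < W.length := lt_of_lt_of_le hq (Ff_le hW u.length)
        have hget : (W.map (repl i c))[q]'(by omega) = repl i c (W[q]) := List.getElem_map _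
        rw [hget]
        cases hWq : W[q] with
        | inl a => simp [repl, pd]
        | inr k =>
          have hk : k < u.length := param_lt hW hud hq hqW hWq
          simp only [repl]
          split
          · simp only [pd]
            rw [decide_eq_true_eq, hm'v]
            split <;> omega
          · split
            · cases hcc : c with
              | inl a => simp [pd]
              | inr j =>
                have hji := hc j hcc
                simp only [pd]
                rw [decide_eq_true_eq, hm'v]
                split <;> omega
            · simp only [pd]
              rw [decide_eq_true_eq, hm'v]
              split <;> omega
      · intro h
        have hFW : Ff d W u.length < W.length := by omega
        have hmd : u.length < d := by
          by_contra h'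
          simp [Ff, h'] at hFW
        have hFfo : Ff d W u.length = fo W u.length := by simp [Ff, hmd]
        have hWF : W[Ff d W u.length]'hFW = Sum.inr u.length := by
          have h2 : fo W u.length < W.length := hFfo ▸ hFW
          have := getElem_fo h2
          revert hFW
          rw [hFfo]
          intro hFW
          exact this
        have hget : (W.map (repl i c))[Ff d W u.length]'h = repl i c (W[Ff d W u.length]'hFW) :=
          List.getElem_map _
        rw [hget, hWF]
        simp only [repl]
        rcases Nat.lt_or_ge u.length i with hmi | hmi
        · rw [if_pos hmi]
          simp only [pd]
          rw [decide_eq_false_iff_not, hm'v]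
          split <;> omega
        · rw [if_neg (by omega), if_neg (by omega)]
          simp only [pd]
          rw [decide_eq_false_iff_not, hm'v]
          split <;> omega
    -- now compute both substs
    show subst (W.map (repl i c)) (u.eraseIdx i) = subst W u
    rw [subst_def, hTW, subst_def, takeWhile_pd hW hud]
    apply List.ext_getElem
    · simp [hlenW]
    · intro q h1 h2
      simp only [List.getElem_map]
      have hqF : q < Ff d W u.length := by
        simp only [List.length_map, List.length_take] at h1
        omega
      have hqW : q < W.length := lt_of_lt_of_le hqF (Ff_le hW u.length)
      have e1 : (List.take (Ff d W u.length) (W.map (repl i c)))[q]'(by simpa using h1)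
          = repl i c (W[q]) := by
        rw [List.getElem_take]
        exact List.getElem_map _
      have e2 : (List.take (Ff d W u.length) W)[q]'(by simpa [List.length_take] using h2)
          = W[q] := List.getElem_take
      rw [e1, e2]
      cases hWq : W[q] with
      | inl a => simp [repl, gg]
      | inr k =>
        have hk : k < u.length := param_lt hW hud hqF hqW hWq
        simp only [repl]
        split
        · -- k < i
          simp only [gg]
          exact getD_eraseIdx_lt u ‹k < i› _
        · split
          · -- k = i
            rename_i hki
            have him : i < u.length := hki ▸ hk
            have hv := hval u hu him
            rw [hki]
            have hgg : gg u (Sum.inr i) = u.getD i (Sum.inr 0) := rfl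
            rw [hgg, hv]
            cases hcc : c with
            | inl a => simp [gg]
            | inr j =>
              have hji := hc j hcc
              simp only [gg]
              exact getD_eraseIdx_lt u hji _
          · -- k > i
            have hki : i < k := by omega
            simp only [gg]
            rw [getD_eraseIdx_ge u (by omega)]
            congr 1
            omega

lemma Ff_eq_fo {d : ℕ} (W : List (σ ⊕ ℕ)) {i : ℕ} (hi : i < d) : Ff d W i = fo W i := by
  simp [Ff, hi]

lemma core {d : ℕ} {W W' : List (σ ⊕ ℕ)} {S S' S'' : Finset (List (σ ⊕ ℕ))}
    (hE : IsEnvelopeOf d W S S') (hE' : IsEnvelopeOf d W' S S'')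
    (hmin : ∀ (e : ℕ) (W₂ : List (σ ⊕ ℕ)) (T : Finset (List (σ ⊕ ℕ))),
      IsEnvelopeOf e W₂ S T → d ≤ e)
    {i : ℕ} (hi : i < d) (hlt : ∀ j, j < i → fo W j = fo W' j)
    (hfi : fo W i < fo W' i) : False := by
  obtain ⟨hW, hS', himg⟩ := hE
  obtain ⟨hW', hS'', himg'⟩ := hE'
  -- every parameter index is exceeded by some word length in S'
  have hAstar : ∀ k, k < d → ∃ u ∈ S', k < u.length := by
    intro k hk
    by_contra h
    push_neg at h
    have := hmin k _ S' (prefix_envelope ⟨hW, hS', himg⟩ hk.le h)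
    omega
  have hpW : fo W i < W.length := fo_lt hW hi
  -- a long word exists in S
  obtain ⟨u₀, hu₀, hu₀l⟩ := hAstar i hi
  have hu₀d := (hS' u₀ hu₀).2
  have ht : subst W u₀ ∈ S := himg ▸ Finset.mem_image_of_mem _ hu₀
  have htlen : fo W i < (subst W u₀).length := by
    rw [length_subst hW hu₀d]
    have := Ff_lt_of_lt hW hu₀l hu₀d
    rw [Ff_eq_fo W hi] at this
    exact this
  have hpW' : fo W i < W'.length := by
    have ht' : subst W u₀ ∈ S''.image (subst W') := by rw [himg']; exact ht
    obtain ⟨v, hv, hveq⟩ := Finset.mem_image.1 ht'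
    have : (subst W u₀).length ≤ W'.length := by
      rw [← hveq, length_subst hW' (hS'' v hv).2]
      exact Ff_le hW' _
    omega
  -- no word of S' has length exactly i
  have hne : ∀ u ∈ S', u.length ≠ i := by
    intro u hu hlen
    have hud := (hS' u hu).2
    have hs : subst W u ∈ S := himg ▸ Finset.mem_image_of_mem _ hu
    have hs' : subst W u ∈ S''.image (subst W') := by rw [himg']; exact hs
    obtain ⟨v, hv, hveq⟩ := Finset.mem_image.1 hs'
    have hvd := (hS'' v hv).2
    have h1 : (subst W u).length = fo W i := by
      rw [length_subst hW hud, hlen, Ff_eq_fo W hi]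
    have h2 : (subst W u).length = Ff d W' v.length := by
      rw [← hveq, length_subst hW' hvd]
    rcases lt_trichotomy v.length i with h | h | h
    · have hvd' : v.length < d := by omega
      have e1 : Ff d W' v.length = fo W' v.length := Ff_eq_fo W' hvd'
      have e2 : fo W' v.length = fo W v.length := (hlt _ h).symm
      have e3 : fo W v.length < fo W i := fo_mono hW h hi
      omega
    · rw [h] at h2
      rw [Ff_eq_fo W' hi] at h2
      omega
    · have : Ff d W' i < Ff d W' v.length := Ff_lt_of_lt hW' h hvd
      rw [Ff_eq_fo W' hi] at this
      omega
  -- the symbol of W' at position fo W i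
  set c := W'[fo W i]'hpW' with hc_def
  have hc : ∀ j, c = Sum.inr j → j < i := by
    intro j hj
    have hj_mem : Sum.inr j ∈ W' := by
      rw [hc_def] at hj
      exact hj ▸ List.getElem_mem hpW'
    have hjd : j < d := hW'.1 j hj_mem
    by_contra h
    push_neg at h
    have h1 : fo W' j ≤ fo W i := fo_le hpW' (hc_def ▸ hj)
    have h2 : fo W' i ≤ fo W' j := by
      rcases eq_or_lt_of_le h with rfl | hlt'
      · exact le_refl _
      · exact (fo_mono hW' hlt' hjd).le
    omega
  -- the value condition
  have hval : ∀ u ∈ S', i < u.length → u.getD i (Sum.inr 0) = gg u c := by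
    intro u hu hiu
    have hud := (hS' u hu).2
    have hs : subst W u ∈ S := himg ▸ Finset.mem_image_of_mem _ hu
    have hs' : subst W u ∈ S''.image (subst W') := by rw [himg']; exact hs
    obtain ⟨v, hv, hveq⟩ := Finset.mem_image.1 hs'
    have hvd := (hS'' v hv).2
    -- position fo W i is inside both substituted words
    have hp_lt : fo W i < Ff d W u.length := by
      have := Ff_lt_of_lt hW hiu hud
      rw [Ff_eq_fo W hi] at this
      exact this
    have hp_lt' : fo W i < Ff d W' v.length := by
      have e : Ff d W' v.length = Ff d W u.length := by
        rw [← length_subst hW' hvd, hveq, length_subst hW hud]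
      omega
    -- left side via recovery in W
    obtain ⟨hfi_lt, hrec⟩ := subst_getElem_fo hW hud hiu
    -- evaluate (subst W' v) at position fo W i
    have hright := getElem_subst hW' hvd hp_lt'
    -- (subst W u)[fo W i] = (subst W' v)[fo W i]
    have hsame : (subst W u)[fo W i]'(by rw [length_subst hW hud]; exact hp_lt)
        = (subst W' v)[fo W i]'(by rw [length_subst hW' hvd]; exact hp_lt') :=
      (List.getElem_of_eq hveq.symm _)
    have hmain : u.getD i (Sum.inr 0) = gg v c := by
      rw [← hrec, hsame, hright]
    rw [hmain]
    -- gg v c = gg u c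
    cases hcc : c with
    | inl a => simp [gg]
    | inr j =>
      have hji := hc j hcc
      simp only [gg]
      -- v.getD j = u.getD j via recovery at fo of j in both words
      have hju : j < u.length := by omega
      have hjv : j < v.length := by
        by_contra hjv
        push_neg at hjv
        have : Ff d W' v.length ≤ Ff d W' j := Ff_mono hW' hjv (by omega)
        have h2 : fo W' j ≤ fo W i := by
          have e2 : fo W j = fo W' j := hlt j hji
          have e3 : fo W j < fo W i := fo_mono hW hji hi
          omega
        rw [Ff_eq_fo W' (by omega : j < d)] at this
        omega
      obtain ⟨hj1, hrecu⟩ := subst_getElem_fo hW hud hju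
      obtain ⟨hj2, hrecv⟩ := subst_getElem_fo hW' hvd hjv
      have hfoj : fo W j = fo W' j := hlt j hji
      have hsamej : (subst W u)[fo W j]'(by rw [length_subst hW hud]; exact hj1)
          = (subst W' v)[fo W' j]'(by rw [length_subst hW' hvd]; exact hj2) := by
        rw [List.getElem_of_eq hveq.symm]
        exact getElem_idx_congr hfoj _
      rw [← hrecu, ← hrecv, hsamej]
  -- contradiction with minimality
  have := hmin (d - 1) _ _ (merge_envelope ⟨hW, hS', himg⟩ hi c hc hne hval)
  omega

lemma subset_aux {d : ℕ} {W W' : List (σ ⊕ ℕ)} {S S' S'' : Finset (List (σ ⊕ ℕ))}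
    (hE : IsEnvelopeOf d W S S') (hE' : IsEnvelopeOf d W' S S'')
    (hfo : ∀ i, i < d → fo W i = fo W' i) : S' ⊆ S'' := by
  intro u hu
  obtain ⟨hW, hS', himg⟩ := hE
  obtain ⟨hW', hS'', himg'⟩ := hE'
  have hud := (hS' u hu).2
  have hs : subst W u ∈ S := himg ▸ Finset.mem_image_of_mem _ hu
  have hs' : subst W u ∈ S''.image (subst W') := by rw [himg']; exact hs
  obtain ⟨v, hv, hveq⟩ := Finset.mem_image.1 hs'
  have hvd := (hS'' v hv).2
  have hL : Ff d W' v.length = Ff d W u.length := by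
    rw [← length_subst hW' hvd, hveq, length_subst hW hud]
  have hlen : v.length = u.length := by
    by_contra hne'
    rcases Nat.lt_or_ge v.length d with hv1 | hv1
    · rcases Nat.lt_or_ge u.length d with hu1 | hu1
      · -- both < d : fo W' v.length = fo W u.length = fo W' u.length
        rw [Ff_eq_fo W' hv1, Ff_eq_fo W hu1, ← hfo v.length hv1] at hL
        rcases Nat.lt_or_ge v.length u.length with h | h
        · have := fo_mono hW h hu1; omega
        · have := fo_mono hW (by omega : u.length < v.length) hv1; omega
      · -- u.length = d, v.length < d
        have hu1' : u.length = d := by omega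
        rw [Ff_eq_fo W' hv1] at hL
        have e1 : Ff d W u.length = W.length := by simp [Ff, hu1']
        have e2 : fo W' v.length = fo W v.length := (hfo _ hv1).symm
        have e3 : fo W v.length < W.length := fo_lt hW hv1
        omega
    · rcases Nat.lt_or_ge u.length d with hu1 | hu1
      · have hv1' : v.length = d := by omega
        have e1 : Ff d W' v.length = W'.length := by simp [Ff, hv1']
        rw [Ff_eq_fo W hu1, hfo u.length hu1] at hL
        have e3 : fo W' u.length < W'.length := fo_lt hW' hu1
        omega
      · omega
  suffices hvu : u = v by rw [hvu]; exact hv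
  apply List.ext_getElem (by omega)
  intro k h1 h2
  have hk : k < u.length := h1
  have hkd : k < d := by omega
  obtain ⟨hk1, hrecu⟩ := subst_getElem_fo hW hud hk
  obtain ⟨hk2, hrecv⟩ := subst_getElem_fo hW' hvd (by omega : k < v.length)
  have hfok : fo W k = fo W' k := hfo k hkd
  have hsame : (subst W u)[fo W k]'(by rw [length_subst hW hud]; exact hk1)
      = (subst W' v)[fo W' k]'(by rw [length_subst hW' hvd]; exact hk2) := by
    rw [List.getElem_of_eq hveq.symm]
    exact getElem_idx_congr hfok _
  have : u.getD k (Sum.inr 0) = v.getD k (Sum.inr 0) := by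
    rw [← hrecu, ← hrecv, hsame]
  rw [List.getD_eq_getElem u _ h1, List.getD_eq_getElem v _ h2] at this
  exact this


end ETU

/-- For any two minimal envelopes `W`, `W'` of a finite set `S` of words over `σ`,
the embedding types coincide: `τ_W(S) = τ_{W'}(S)`. -/
theorem embedding_type_unique {σ : Type} [Finite σ] [DecidableEq σ]
    (S : Finset (List (σ ⊕ ℕ))) (hS : ∀ w ∈ S, IsPWord 0 w)
    (d d' : ℕ) (W W' : List (σ ⊕ ℕ)) (S' S'' : Finset (List (σ ⊕ ℕ)))
    (hW : IsEnvelopeOf d W S S') (hW' : IsEnvelopeOf d' W' S S'')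
    (hmin : ∀ (e : ℕ) (W₂ : List (σ ⊕ ℕ)) (T : Finset (List (σ ⊕ ℕ))),
      IsEnvelopeOf e W₂ S T → d ≤ e)
    (hmin' : ∀ (e : ℕ) (W₂ : List (σ ⊕ ℕ)) (T : Finset (List (σ ⊕ ℕ))),
      IsEnvelopeOf e W₂ S T → d' ≤ e) :
    S' = S'' := by
  have hd : d' = d := le_antisymm (hmin' d W S' hW) (hmin d' W' S'' hW')
  rw [hd] at hW' hmin'
  have hfo : ∀ i, i < d → ETU.fo W i = ETU.fo W' i := by
    intro i
    induction i using Nat.strong_induction_on with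
    | _ i ih =>
      intro hi
      by_contra hne
      rcases Nat.lt_or_ge (ETU.fo W i) (ETU.fo W' i) with h | h
      · exact ETU.core hW hW' hmin hi (fun j hj => ih j hj (hj.trans hi)) h
      · have h' : ETU.fo W' i < ETU.fo W i := by omega
        exact ETU.core hW' hW hmin' hi (fun j hj => (ih j hj (hj.trans hi)).symm) h'
  exact Finset.Subset.antisymm (ETU.subset_aux hW hW' hfo)
    (ETU.subset_aux hW' hW (fun i hi => (hfo i hi).symm))
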